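/- Let γ ≥ 1 and set C' = 14γ/3. There exists an absolute constant θ' ∈ (0,1) (any θ' with (1−θ')²/(2θ'+1) ≥ 4/7 works) such that: whenever n F ≤ θ' C' ln n and (1−θ') ln n ≥ 3/7, one has P( N − nF ≥ (1−θ') C' ln n ) ≤ F n^{−γ}, where N = ∑_{i=1}^n 1_{X_i ∈ A} and F = P(X_1 ∈ A). -/

import Mathlib

open MeasureTheory ProbabilityTheory Filter
open scoped ENNReal NNReal BigOperators

noncomputable section

/-- Sup norm `‖g‖_∞ = sup_x |g x|` of a (bounded) function. -/
def supNorm (g : ℝ → ℝ) : ℝ := ⨆ x : ℝ, |g x|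

/-- The Haar wavelets on `ℝ`: `ψ_{-1,k} = 1_{[k,k+1)}` and, for `j ≥ 0`,
`ψ_{jk} = 2^{j/2} (1_{[k2^{-j},(k+1/2)2^{-j})} - 1_{[(k+1/2)2^{-j},(k+1)2^{-j})})`. -/
def haar (j k : ℤ) (x : ℝ) : ℝ :=
  if j = -1 then (Set.Ico (k : ℝ) ((k : ℝ) + 1)).indicator (fun _ => (1 : ℝ)) x
  else (2 : ℝ) ^ ((j : ℝ) / 2) *
    ((Set.Ico ((k : ℝ) * (2 : ℝ) ^ (-j)) (((k : ℝ) + 1 / 2) * (2 : ℝ) ^ (-j))).indicator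
        (fun _ => (1 : ℝ)) x
      - (Set.Ico (((k : ℝ) + 1 / 2) * (2 : ℝ) ^ (-j)) (((k : ℝ) + 1) * (2 : ℝ) ^ (-j))).indicator
        (fun _ => (1 : ℝ)) x)

/-- `‖ψ_{jk}‖_∞`, i.e. `1` if `j = -1` and `2^{j/2}` otherwise. -/
def haarSupNorm (j : ℤ) : ℝ := if j = -1 then 1 else (2 : ℝ) ^ ((j : ℝ) / 2)

/-- The Haar wavelet coefficient `β_{jk} = ∫ ψ_{jk} f`. -/
def haarCoef (f : ℝ → ℝ) (j k : ℤ) : ℝ := ∫ x : ℝ, haar j k x * f x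

/-- `σ_{jk}² = ∫ ψ_{jk}² f − β_{jk}²`. -/
def haarVar (f : ℝ → ℝ) (j k : ℤ) : ℝ := (∫ x : ℝ, (haar j k x) ^ 2 * f x) - (haarCoef f j k) ^ 2

/-- Empirical coefficient `n⁻¹ ∑ᵢ g(Yᵢ)` for data `Y`. -/
def empCoefG {n : ℕ} (g : ℝ → ℝ) (Y : Fin n → ℝ) : ℝ := (n : ℝ)⁻¹ * ∑ i, g (Y i)

/-- Empirical variance estimator
`σ̂² = (n(n−1))⁻¹ ∑_{i} ∑_{l<i} (g(Yᵢ) − g(Y_l))²`. -/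
def empVarG {n : ℕ} (g : ℝ → ℝ) (Y : Fin n → ℝ) : ℝ :=
  ((n : ℝ) * ((n : ℝ) - 1))⁻¹ *
    ∑ i : Fin n, ∑ l ∈ Finset.univ.filter (fun l => l < i), (g (Y i) - g (Y l)) ^ 2

/-- `σ̃² = σ̂² + 2M√(2γσ̂² (ln n)/n) + 8γM² (ln n)/n`, `M` playing the role of `‖g‖_∞`. -/
def tildeVarG {n : ℕ} (γ M : ℝ) (g : ℝ → ℝ) (Y : Fin n → ℝ) : ℝ :=
  empVarG g Y + 2 * M * Real.sqrt (2 * γ * empVarG g Y * Real.log n / n)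
    + 8 * γ * M ^ 2 * Real.log n / n

/-- The threshold `η = √(2γσ̃² (ln n)/n) + 2Mγ(ln n)/(3n)`. -/
def threshG {n : ℕ} (γ M : ℝ) (g : ℝ → ℝ) (Y : Fin n → ℝ) : ℝ :=
  Real.sqrt (2 * γ * tildeVarG γ M g Y * Real.log n / n) + 2 * M * γ * Real.log n / (3 * n)

/-- `β̂_{jk}` computed from data `Y`. -/
def empCoef {n : ℕ} (j k : ℤ) (Y : Fin n → ℝ) : ℝ := empCoefG (haar j k) Y

/-- `σ̂_{jk}²` computed from data `Y`. -/
def empVar {n : ℕ} (j k : ℤ) (Y : Fin n → ℝ) : ℝ := empVarG (haar j k) Y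

/-- `σ̃_{jk}²` computed from data `Y`. -/
def tildeVar {n : ℕ} (γ : ℝ) (j k : ℤ) (Y : Fin n → ℝ) : ℝ :=
  tildeVarG γ (haarSupNorm j) (haar j k) Y

/-- The threshold `η_{jk,γ}` computed from data `Y`. -/
def thresh {n : ℕ} (γ : ℝ) (j k : ℤ) (Y : Fin n → ℝ) : ℝ :=
  threshG γ (haarSupNorm j) (haar j k) Y

/-- `j₀ = ⌊log₂(n^c (ln n)^{c'})⌋`. -/
def jmax (n : ℕ) (c c' : ℝ) : ℤ := ⌊Real.logb 2 ((n : ℝ) ^ c * (Real.log n) ^ c')⌋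

/-- The Haar thresholding estimator
`f̃_{n,γ} = ∑_{(j,k) ∈ Γ_n} β̂_{jk} 1_{|β̂_{jk}| ≥ η_{jk,γ}} ψ_{jk}` built from data `Y`. -/
def haarEstimator {n : ℕ} (γ c c' : ℝ) (Y : Fin n → ℝ) (x : ℝ) : ℝ :=
  ∑ j ∈ Finset.Icc (-1 : ℤ) (jmax n c c'),
    ∑' k : ℤ, (if thresh γ j k Y ≤ |empCoef j k Y| then empCoef j k Y else 0) * haar j k x

/-- `f` is a probability density on `ℝ`. -/
def IsDensity (f : ℝ → ℝ) : Prop :=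
  Measurable f ∧ (∀ x, 0 ≤ f x) ∧ (∫ x : ℝ, f x) = 1

/-- `X₁, …, X_n` are i.i.d. random variables with density `f` (w.r.t. Lebesgue measure). -/
def IsIIDSample {Ω : Type*} [MeasurableSpace Ω] (P : Measure Ω) {n : ℕ}
    (X : Fin n → Ω → ℝ) (f : ℝ → ℝ) : Prop :=
  (∀ i, Measurable (X i)) ∧
  iIndepFun X P ∧
  (∀ i, Measure.map (X i) P = volume.withDensity (fun x => ENNReal.ofReal (f x)))

/-- `X₁, …, X_n` are i.i.d. real random variables. -/
def IsIID {Ω : Type*} [MeasurableSpace Ω] (P : Measure Ω) {n : ℕ} (X : Fin n → Ω → ℝ) : Prop :=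
  (∀ i, Measurable (X i)) ∧
  iIndepFun X P ∧
  (∀ i i', Measure.map (X i) P = Measure.map (X i') P)

/-- The `ℓ^p` norm of a `ℤ`-indexed sequence, `p ∈ [1,∞]`. -/
def lpSeqNorm (p : ℝ≥0∞) (a : ℤ → ℝ) : ℝ≥0∞ :=
  if p = ∞ then ⨆ k : ℤ, (‖a k‖₊ : ℝ≥0∞)
  else (∑' k : ℤ, (‖a k‖₊ : ℝ≥0∞) ^ p.toReal) ^ (1 / p.toReal)

/-- The Besov norm `‖f‖_{α,p,q}` computed from the Haar coefficients of `f`. -/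
def besovNorm (α : ℝ) (p q : ℝ≥0∞) (f : ℝ → ℝ) : ℝ≥0∞ :=
  lpSeqNorm p (fun k => haarCoef f (-1) k) +
  (if q = ∞ then
      ⨆ j : ℕ, ((2 : ℝ≥0∞) ^ ((j : ℝ) * (α + 1 / 2 - 1 / p.toReal)) *
        lpSeqNorm p (fun k => haarCoef f (j : ℤ) k))
    else
      (∑' j : ℕ, ((2 : ℝ≥0∞) ^ ((j : ℝ) * (α + 1 / 2 - 1 / p.toReal)) *
        lpSeqNorm p (fun k => haarCoef f (j : ℤ) k)) ^ q.toReal) ^ (1 / q.toReal))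


lemma exp_three_halves_le_six : Real.exp (3 / 2) ≤ 6 := by
  have h1 : Real.exp (3 / 2) ^ 2 = Real.exp 1 ^ 3 := by
    rw [← Real.exp_nat_mul, ← Real.exp_nat_mul]; norm_num
  have h2 : Real.exp 1 < 2.7182818286 := Real.exp_one_lt_d9
  have h3 : (0 : ℝ) < Real.exp (3 / 2) := Real.exp_pos _
  have h4 : (0 : ℝ) < Real.exp 1 := Real.exp_pos _
  have h5 : Real.exp 1 ^ 3 < 36 := by
    nlinarith [h2, h4, mul_pos h4 h4, sq_nonneg (Real.exp 1 - 2.7182818286),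
      sq_nonneg (Real.exp 1 + 2.7182818286)]
  have h6 : Real.exp (3 / 2) ^ 2 < 36 := h1 ▸ h5
  nlinarith [h3, h6]

lemma exp_half_nat_le_factorial : ∀ k : ℕ, 3 ≤ k → Real.exp ((k : ℝ) / 2) ≤ k.factorial := by
  intro k hk
  induction k with
  | zero => omega
  | succ m ih =>
    rcases Nat.lt_or_ge m 3 with hm | hm
    · interval_cases m
      · omega
      · omega
      · -- k = 3
        simpa [show Nat.factorial 3 = 6 from rfl] using exp_three_halves_le_six
    · have hstep : Real.exp (((m : ℝ) + 1) / 2) = Real.exp (1 / 2) * Real.exp ((m : ℝ) / 2) := by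
        rw [← Real.exp_add]; ring_nf
      have hhalf : Real.exp (1 / 2 : ℝ) ≤ 2 := by
        have h1 : Real.exp (1 / 2 : ℝ) ^ 2 = Real.exp 1 := by
          rw [← Real.exp_nat_mul]; norm_num
        nlinarith [Real.exp_one_lt_d9, Real.exp_pos (1 / 2 : ℝ)]
      have ihm := ih hm
      have hmf : (0 : ℝ) ≤ m.factorial := by positivity
      calc Real.exp (((m : ℕ) + 1 : ℕ) / 2 : ℝ)
          = Real.exp (1 / 2) * Real.exp ((m : ℝ) / 2) := by push_cast; rw [hstep]
        _ ≤ 2 * (m.factorial : ℝ) := by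
            exact mul_le_mul hhalf ihm (Real.exp_nonneg _) (by norm_num)
        _ ≤ ((m + 1) : ℝ) * m.factorial := by
            have : (2 : ℝ) ≤ (m : ℝ) + 1 := by
              have : (3 : ℝ) ≤ (m : ℝ) := by exact_mod_cast hm
              linarith
            nlinarith [hmf]
        _ = ((m + 1).factorial : ℝ) := by rw [Nat.factorial_succ]; push_cast; ring

set_option maxHeartbeats 1000000

open scoped Classical
/-- Lemma B.3: with `C' = 14γ/3` and any `θ' ∈ (0,1)` with `(1−θ')²/(2θ'+1) ≥ 4/7`, if
`nF ≤ θ'C' ln n` and `(1−θ') ln n ≥ 3/7` then `P(N − nF ≥ (1−θ')C' ln n) ≤ F n^{−γ}`. -/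
theorem statement9 (γ : ℝ) (hγ : 1 ≤ γ) (C' : ℝ) (hC' : C' = 14 * γ / 3)
    (θ' : ℝ) (hθ'0 : 0 < θ') (hθ'1 : θ' < 1)
    (hθ' : 4 / 7 ≤ (1 - θ') ^ 2 / (2 * θ' + 1)) :
    ∀ n : ℕ, ∀ hn : 2 ≤ n,
    ∀ (Ω : Type) (_ : MeasurableSpace Ω) (P : Measure Ω), IsProbabilityMeasure P →
    ∀ X : Fin n → Ω → ℝ, IsIID P X →
    ∀ A : Set ℝ, MeasurableSet A →
    ∀ F : ℝ, F = (P {ω | X ⟨0, by omega⟩ ω ∈ A}).toReal →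
    (n : ℝ) * F ≤ θ' * C' * Real.log n →
    3 / 7 ≤ (1 - θ') * Real.log n →
    (P {ω | (1 - θ') * C' * Real.log n ≤
        (∑ i, if X i ω ∈ A then (1 : ℝ) else 0) - n * F}).toReal ≤ F * (n : ℝ) ^ (-γ) := by
  intro n hn Ω mΩ P hPprob X hX A hA F hF hnF hlogn
  haveI := hPprob
  obtain ⟨hXmeas, hXindep, hXident⟩ := hX
  set L := Real.log n with hLdef
  have hn0 : (0 : ℝ) < n := by positivity
  have hn2 : (2 : ℝ) ≤ n := by exact_mod_cast hn
  have hlog2L : Real.log 2 ≤ L := Real.log_le_log (by norm_num) hn2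
  have hlog2 : (0.6931471803 : ℝ) < Real.log 2 := Real.log_two_gt_d9
  have hL : (0.6931471803 : ℝ) < L := lt_of_lt_of_le hlog2 hlog2L
  have hLpos : (0 : ℝ) < L := by linarith
  have hγ0 : (0 : ℝ) < γ := by linarith
  -- θ' ≤ 1/7
  have h21 : (0 : ℝ) < 2 * θ' + 1 := by linarith
  have hθ'' : 4 / 7 * (2 * θ' + 1) ≤ (1 - θ') ^ 2 := (le_div_iff₀ h21).mp hθ'
  have hθ7 : θ' ≤ 1 / 7 := by nlinarith [sq_nonneg (1 - θ'), hθ'0, hθ'1]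
  set i0 : Fin n := ⟨0, by omega⟩ with hi0
  set μ := P (X i0 ⁻¹' A) with hμdef
  have hFμ : F = μ.toReal := hF
  have hF0 : 0 ≤ F := by rw [hFμ]; exact ENNReal.toReal_nonneg
  set t := (1 - θ') * C' * L with htdef
  set m := ⌈t⌉₊ with hmdef
  have hmt : t ≤ m := Nat.le_ceil t
  have h4γ : 4 * γ * L ≤ t := by
    have h67 : 6 / 7 ≤ 1 - θ' := by linarith
    rw [htdef, hC']
    nlinarith [mul_pos hγ0 hLpos]
  have h4γm : 4 * γ * L ≤ (m : ℝ) := le_trans h4γ hmt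
  have hm3 : 3 ≤ m := by
    have h2m : (2 : ℝ) < m := by nlinarith
    have : 2 < m := by exact_mod_cast h2m
    omega
  have hmpos : (0 : ℝ) < m := by
    have : (3 : ℝ) ≤ m := by exact_mod_cast hm3
    linarith
  set a := θ' * C' with hadef
  have haL0 : 0 ≤ a * L := by
    have : 0 < C' := by rw [hC']; positivity
    positivity
  -- Key analytic estimate
  have key : (a * L) ^ (m - 1) * Real.exp (2 * γ * L) ≤ (m.factorial : ℝ) := by
    have h2γm : 2 * γ * L ≤ (m : ℝ) / 2 := by linarith
    have hexp_mono : Real.exp (2 * γ * L) ≤ Real.exp ((m : ℝ) / 2) := Real.exp_le_exp.mpr h2γm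
    rcases le_or_gt (a * L) 1 with hcase | hcase
    · have h1 : (a * L) ^ (m - 1) ≤ 1 := pow_le_one₀ haL0 hcase
      have h2 : Real.exp ((m : ℝ) / 2) ≤ (m.factorial : ℝ) := exp_half_nat_le_factorial m hm3
      calc (a * L) ^ (m - 1) * Real.exp (2 * γ * L)
          ≤ 1 * Real.exp ((m : ℝ) / 2) :=
            mul_le_mul h1 hexp_mono (Real.exp_nonneg _) (by norm_num)
        _ ≤ (m.factorial : ℝ) := by simpa using h2
    · -- a*L ≥ 1
      have haL1 : (1 : ℝ) ≤ a * L := hcase.le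
      have hpow : (a * L) ^ (m - 1) ≤ (a * L) ^ m :=
        pow_le_pow_right₀ haL1 (Nat.sub_le m 1)
      have h6aL : 6 * (a * L) ≤ (m : ℝ) := by
        have hC'pos : (0 : ℝ) < C' := by rw [hC']; positivity
        have h67 : 6 / 7 ≤ 1 - θ' := by linarith
        have : 6 * (a * L) ≤ t := by
          rw [hadef, htdef]
          nlinarith [mul_pos hC'pos hLpos]
        linarith [hmt]
      have hfacle : (m : ℝ) ^ m ≤ (m.factorial : ℝ) * Real.exp m := by
        have := Real.pow_div_factorial_le_exp (x := (m : ℝ)) (by positivity) m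
        have hfpos : (0 : ℝ) < m.factorial := by positivity
        rw [div_le_iff₀ hfpos] at this
        linarith [this]
      -- multiply target by 6^m
      have h6pos : (0 : ℝ) < 6 ^ m := by positivity
      rw [← mul_le_mul_iff_of_pos_right h6pos]
      have hexp32 : Real.exp (3 / 2 : ℝ) ≤ 6 := exp_three_halves_le_six
      calc (a * L) ^ (m - 1) * Real.exp (2 * γ * L) * 6 ^ m
          ≤ (a * L) ^ m * Real.exp (2 * γ * L) * 6 ^ m := by
            apply mul_le_mul_of_nonneg_right _ (le_of_lt h6pos)
            exact mul_le_mul_of_nonneg_right hpow (Real.exp_nonneg _)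
        _ = (6 * (a * L)) ^ m * Real.exp (2 * γ * L) := by
            rw [mul_pow]; ring
        _ ≤ (m : ℝ) ^ m * Real.exp (2 * γ * L) := by
            apply mul_le_mul_of_nonneg_right _ (Real.exp_nonneg _)
            exact pow_le_pow_left₀ (by positivity) h6aL m
        _ ≤ ((m.factorial : ℝ) * Real.exp m) * Real.exp (2 * γ * L) := by
            apply mul_le_mul_of_nonneg_right hfacle (Real.exp_nonneg _)
        _ = (m.factorial : ℝ) * Real.exp ((m : ℝ) + 2 * γ * L) := by
            rw [Real.exp_add]; ring
        _ ≤ (m.factorial : ℝ) * Real.exp ((m : ℝ) * (3 / 2)) := by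
            apply mul_le_mul_of_nonneg_left _ (by positivity)
            apply Real.exp_le_exp.mpr; linarith
        _ = (m.factorial : ℝ) * Real.exp (3 / 2 : ℝ) ^ m := by
            rw [← Real.exp_nat_mul]
        _ ≤ (m.factorial : ℝ) * 6 ^ m := by
            apply mul_le_mul_of_nonneg_left _ (by positivity)
            exact pow_le_pow_left₀ (Real.exp_nonneg _) hexp32 m
  -- Event inclusion
  set Ev := {ω | (1 - θ') * C' * Real.log n ≤
      (∑ i, if X i ω ∈ A then (1 : ℝ) else 0) - n * F} with hEv
  have hincl : Ev ⊆ ⋃ S ∈ (Finset.univ.powersetCard m : Finset (Finset (Fin n))),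
      ⋂ i ∈ S, X i ⁻¹' A := by
    intro ω hω
    simp only [hEv, Set.mem_setOf_eq] at hω
    have hnF0 : 0 ≤ (n : ℝ) * F := mul_nonneg (by positivity) hF0
    have hNge : t ≤ ∑ i, if X i ω ∈ A then (1 : ℝ) else 0 := by
      rw [htdef]; linarith
    have hsum : (∑ i, if X i ω ∈ A then (1 : ℝ) else 0) =
        ((Finset.univ.filter fun i => X i ω ∈ A).card : ℝ) := by
      rw [Finset.sum_boole]
    have hcard : m ≤ (Finset.univ.filter fun i => X i ω ∈ A).card := by
      rw [hmdef]
      apply Nat.ceil_le.mpr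
      rw [hsum] at hNge
      exact_mod_cast hNge
    obtain ⟨S, hSsub, hScard⟩ := Finset.exists_subset_card_eq hcard
    apply Set.mem_biUnion (show S ∈ Finset.univ.powersetCard m from
      Finset.mem_powersetCard.mpr ⟨Finset.subset_univ S, hScard⟩)
    apply Set.mem_biInter
    intro i hi
    exact (Finset.mem_filter.mp (hSsub hi)).2
  have hPle : P Ev ≤ (n.choose m : ℝ≥0∞) * μ ^ m := by
    calc P Ev ≤ P (⋃ S ∈ (Finset.univ.powersetCard m : Finset (Finset (Fin n))),
          ⋂ i ∈ S, X i ⁻¹' A) := measure_mono hincl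
      _ ≤ ∑ S ∈ (Finset.univ.powersetCard m : Finset (Finset (Fin n))),
          P (⋂ i ∈ S, X i ⁻¹' A) := MeasureTheory.measure_biUnion_finset_le _ _
      _ = ∑ S ∈ (Finset.univ.powersetCard m : Finset (Finset (Fin n))), μ ^ m := by
          apply Finset.sum_congr rfl
          intro S hS
          rw [hXindep.meas_biInter (fun i _ => ⟨A, hA, rfl⟩)]
          have hident : ∀ i ∈ S, P (X i ⁻¹' A) = μ := by
            intro i _
            rw [hμdef, ← Measure.map_apply (hXmeas i) hA, hXident i i0,
              Measure.map_apply (hXmeas i0) hA]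
          rw [Finset.prod_congr rfl hident, Finset.prod_const,
            (Finset.mem_powersetCard.mp hS).2]
      _ = (n.choose m : ℝ≥0∞) * μ ^ m := by
          rw [Finset.sum_const, Finset.card_powersetCard, Finset.card_univ,
            Fintype.card_fin, nsmul_eq_mul]
  have hne : (n.choose m : ℝ≥0∞) * μ ^ m ≠ ⊤ :=
    ENNReal.mul_ne_top (ENNReal.natCast_ne_top _) (ENNReal.pow_ne_top (measure_ne_top P _))
  have htoReal : (P Ev).toReal ≤ (n.choose m : ℝ) * F ^ m := by
    have := ENNReal.toReal_mono hne hPle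
    rwa [ENNReal.toReal_mul, ENNReal.toReal_natCast, ENNReal.toReal_pow, ← hFμ] at this
  refine le_trans htoReal ?_
  -- final real arithmetic
  have hfacpos : (0 : ℝ) < m.factorial := by positivity
  have hexppos : (0 : ℝ) < Real.exp (2 * γ * L) := Real.exp_pos _
  rw [← mul_le_mul_iff_of_pos_right (mul_pos hfacpos hexppos)]
  have hchoose : (n.choose m : ℝ) * (m.factorial : ℝ) ≤ (n : ℝ) ^ m := by
    have h1 : n.choose m * m.factorial ≤ n ^ m := by
      have := Nat.descFactorial_le_pow n m
      rw [Nat.descFactorial_eq_factorial_mul_choose] at this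
      rw [Nat.mul_comm]
      exact this
    exact_mod_cast h1
  have hFm0 : (0 : ℝ) ≤ F ^ m := by positivity
  have hsplit : ((n : ℝ) * F) ^ m ≤ ((n : ℝ) * F) * (a * L) ^ (m - 1) := by
    have hm1 : m = (m - 1) + 1 := by omega
    have hnFle : (n : ℝ) * F ≤ a * L := by rw [hadef]; exact hnF
    calc ((n : ℝ) * F) ^ m = ((n : ℝ) * F) * ((n : ℝ) * F) ^ (m - 1) := by
          conv_lhs => rw [hm1]
          rw [pow_succ]; ring
      _ ≤ ((n : ℝ) * F) * (a * L) ^ (m - 1) := by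
          apply mul_le_mul_of_nonneg_left _ (mul_nonneg (by positivity) hF0)
          exact pow_le_pow_left₀ (mul_nonneg (by positivity) hF0) hnFle _
  have hnexp : (n : ℝ) ≤ (n : ℝ) ^ (-γ) * Real.exp (2 * γ * L) := by
    rw [Real.rpow_def_of_pos hn0, ← hLdef, ← Real.exp_add]
    have hnL : (n : ℝ) = Real.exp L := (Real.exp_log hn0).symm
    conv_lhs => rw [hnL]
    apply Real.exp_le_exp.mpr
    nlinarith [hLpos, hγ, mul_le_mul_of_nonneg_right hγ hLpos.le]
  calc (n.choose m : ℝ) * F ^ m * ((m.factorial : ℝ) * Real.exp (2 * γ * L))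
      = ((n.choose m : ℝ) * (m.factorial : ℝ)) * F ^ m * Real.exp (2 * γ * L) := by ring
    _ ≤ (n : ℝ) ^ m * F ^ m * Real.exp (2 * γ * L) := by
        apply mul_le_mul_of_nonneg_right _ (Real.exp_nonneg _)
        exact mul_le_mul_of_nonneg_right hchoose hFm0
    _ = ((n : ℝ) * F) ^ m * Real.exp (2 * γ * L) := by rw [mul_pow]
    _ ≤ (((n : ℝ) * F) * (a * L) ^ (m - 1)) * Real.exp (2 * γ * L) :=
        mul_le_mul_of_nonneg_right hsplit (Real.exp_nonneg _)
    _ = ((n : ℝ) * F) * ((a * L) ^ (m - 1) * Real.exp (2 * γ * L)) := by ring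
    _ ≤ ((n : ℝ) * F) * (m.factorial : ℝ) :=
        mul_le_mul_of_nonneg_left key (mul_nonneg (by positivity) hF0)
    _ ≤ (F * ((n : ℝ) ^ (-γ) * Real.exp (2 * γ * L))) * (m.factorial : ℝ) := by
        apply mul_le_mul_of_nonneg_right _ (le_of_lt hfacpos)
        calc (n : ℝ) * F = F * (n : ℝ) := by ring
          _ ≤ F * ((n : ℝ) ^ (-γ) * Real.exp (2 * γ * L)) :=
            mul_le_mul_of_nonneg_left hnexp hF0
    _ = F * (n : ℝ) ^ (-γ) * ((m.factorial : ℝ) * Real.exp (2 * γ * L)) := by ring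

end
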